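/- Let f_1,...,f_r be real-analytic functions on ℝ^n and φ real-analytic. If there exist continuous functions φ_1,...,φ_r on ℝ^n with ∑_i φ_i f_i = φ, then there exist functions φ_1^#,...,φ_r^# on ℝ^n, continuous on ℝ^n and real-analytic on the open set Ω = {x : f_i(x) ≠ 0 for some i}, such that ∑_i φ_i^# f_i = φ. -/

import Mathlib

open scoped RealInnerProductSpace
noncomputable section

namespace St13

variable {n : ℕ}

local notation "E" => EuclideanSpace ℝ (Fin n)

/-- first-component inner-product slot -/
def mslot (a : E) : (E × ℝ) →L[ℝ] ℝ := (innerSL ℝ a).comp (ContinuousLinearMap.fst ℝ E ℝ)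

def wslot : (E × ℝ) →L[ℝ] ℝ := ContinuousLinearMap.snd ℝ E ℝ

lemma mslot_apply (a : E) (z : E × ℝ) : mslot a z = ⟪a, z.1⟫ := rfl
lemma wslot_apply (z : E × ℝ) : wslot (n := n) z = z.2 := rfl

lemma norm_mslot_le (a : E) : ‖mslot a‖ ≤ ‖a‖ := by
  refine ContinuousLinearMap.opNorm_le_bound _ (norm_nonneg a) (fun z => ?_)
  rw [mslot_apply]
  calc |⟪a, z.1⟫| ≤ ‖a‖ * ‖z.1‖ := abs_real_inner_le_norm a z.1
  _ ≤ ‖a‖ * ‖z‖ := by gcongr; exact norm_fst_le z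

lemma norm_wslot_le : ‖wslot (n := n)‖ ≤ 1 := by
  refine ContinuousLinearMap.opNorm_le_bound _ zero_le_one (fun z => ?_)
  rw [wslot_apply, one_mul]
  exact norm_snd_le z

/-- the `j`-linear map `(v₁,…,v_j) ↦ ∏_{i<N} (v_i).2 * ∏_{N ≤ i} ⟪a,(v_i).1⟫`. -/
def slotProd (a : E) (N j : ℕ) : ContinuousMultilinearMap ℝ (fun _ : Fin j => E × ℝ) ℝ :=
  (ContinuousMultilinearMap.mkPiAlgebraFin ℝ j ℝ).compContinuousLinearMap
    (fun i => if (i : ℕ) < N then wslot else mslot a)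

lemma slotProd_apply (a : E) (N j : ℕ) (h : N ≤ j) (y : E × ℝ) :
    slotProd a N j (fun _ => y) = y.2 ^ N * ⟪a, y.1⟫ ^ (j - N) := by
  rw [slotProd, ContinuousMultilinearMap.compContinuousLinearMap_apply,
    ContinuousMultilinearMap.mkPiAlgebraFin_apply, List.prod_ofFn]
  have : ∀ i : Fin j, (if (i : ℕ) < N then wslot else mslot a) y
      = (fun i : ℕ => if i < N then y.2 else ⟪a, y.1⟫) (i : ℕ) := by
    intro i; by_cases hi : (i : ℕ) < N <;> simp [hi, mslot_apply, wslot_apply]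
  rw [Finset.prod_congr rfl (fun i _ => this i),
    Fin.prod_univ_eq_prod_range (fun i : ℕ => if i < N then y.2 else ⟪a, y.1⟫) j]
  rw [Finset.range_eq_Ico, ← Finset.prod_Ico_consecutive _ (Nat.zero_le N) h]
  have h1 : ∀ i ∈ Finset.Ico 0 N, (if i < N then y.2 else ⟪a, y.1⟫) = y.2 := by
    intro i hi; simp only [Finset.mem_Ico] at hi; simp [hi.2]
  have h2 : ∀ i ∈ Finset.Ico N j, (if i < N then y.2 else ⟪a, y.1⟫) = ⟪a, y.1⟫ := by
    intro i hi; simp only [Finset.mem_Ico] at hi; simp [not_lt.mpr hi.1]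
  rw [Finset.prod_congr rfl h1, Finset.prod_congr rfl h2, Finset.prod_const, Finset.prod_const,
    Nat.card_Ico, Nat.card_Ico, Nat.sub_zero]

lemma norm_slotProd_le (a : E) (N j : ℕ) (h : N ≤ j) :
    ‖slotProd a N j‖ ≤ ‖a‖ ^ (j - N) := by
  calc ‖slotProd a N j‖
      ≤ ‖ContinuousMultilinearMap.mkPiAlgebraFin ℝ j ℝ‖ *
        ∏ i : Fin j, ‖(if (i : ℕ) < N then wslot (n := n) else mslot a)‖ :=
        ContinuousMultilinearMap.norm_compContinuousLinearMap_le _ _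
    _ ≤ 1 * ∏ i : Fin j, ‖(if (i : ℕ) < N then wslot (n := n) else mslot a)‖ := by
        apply mul_le_mul_of_nonneg_right (le_of_eq ContinuousMultilinearMap.norm_mkPiAlgebraFin)
        exact Finset.prod_nonneg (fun i _ => norm_nonneg _)
    _ = ∏ i : Fin j, ‖(if (i : ℕ) < N then wslot (n := n) else mslot a)‖ := one_mul _
    _ ≤ ∏ i : Fin j, (fun i : ℕ => if i < N then 1 else ‖a‖) (i : ℕ) := by
        apply Finset.prod_le_prod
        · intro i _; positivity
        · intro i _; by_cases hi : (i : ℕ) < N <;>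
            simp [hi, norm_wslot_le, norm_mslot_le]
    _ = ‖a‖ ^ (j - N) := by
        rw [Fin.prod_univ_eq_prod_range (fun i : ℕ => if i < N then (1:ℝ) else ‖a‖) j,
          Finset.range_eq_Ico,
          ← Finset.prod_Ico_consecutive _ (Nat.zero_le N) h]
        have h1 : ∀ i ∈ Finset.Ico 0 N, (if i < N then (1:ℝ) else ‖a‖) = 1 := by
          intro i hi; simp only [Finset.mem_Ico] at hi; simp [hi.2]
        have h2 : ∀ i ∈ Finset.Ico N j, (if i < N then (1:ℝ) else ‖a‖) = ‖a‖ := by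
          intro i hi; simp only [Finset.mem_Ico] at hi; simp [not_lt.mpr hi.1]
        rw [Finset.prod_congr rfl h1, Finset.prod_congr rfl h2, Finset.prod_const,
          Finset.prod_const]
        simp [Nat.card_Ico]

lemma exp_hasSum (x : ℝ) : HasSum (fun k => x ^ k / (Nat.factorial k : ℝ)) (Real.exp x) := by
  rw [Real.exp_eq_exp_ℝ]
  exact NormedSpace.expSeries_div_hasSum_exp x

lemma pow_div_factorial_le_exp (x : ℝ) (hx : 0 ≤ x) (k : ℕ) : x ^ k / (Nat.factorial k : ℝ) ≤ Real.exp x := by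
  refine le_hasSum (exp_hasSum x) k (fun j _ => by positivity)


def elemFun (c : ℝ) (a : E) (N : ℕ) : E × ℝ → ℝ := fun z => c * Real.exp ⟪a, z.1⟫ * z.2 ^ N

def elemSeries (c : ℝ) (a : E) (N : ℕ) (x₀ : E) : FormalMultilinearSeries ℝ (E × ℝ) ℝ :=
  fun j => if N ≤ j then (c * Real.exp ⟪a, x₀⟫ / (Nat.factorial (j - N) : ℝ)) • slotProd a N j
    else 0

/-- the crucial uniform bound for the coefficients of the elementary series -/
lemma norm_elemSeries_le (c : ℝ) (a : E) (N : ℕ) (x₀ : E) {t : ℝ} (ht0 : 0 ≤ t) (ht1 : t ≤ 1)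
    (j : ℕ) :
    ‖elemSeries c a N x₀ j‖ * t ^ j ≤ |c| * Real.exp (‖a‖ * ‖x₀‖ + ‖a‖) * t ^ N := by
  have hpos : (0:ℝ) ≤ |c| * Real.exp (‖a‖ * ‖x₀‖ + ‖a‖) * t ^ N := by positivity
  rw [elemSeries]
  by_cases h : N ≤ j
  · rw [if_pos h]
    have hj : j = N + (j - N) := (Nat.add_sub_cancel' h).symm
    set k := j - N with hk
    have hnorm : ‖(c * Real.exp ⟪a, x₀⟫ / (Nat.factorial k : ℝ)) • slotProd a N j‖
        ≤ |c| * Real.exp ⟪a, x₀⟫ / (Nat.factorial k : ℝ) * ‖a‖ ^ k := by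
      have h0 := norm_smul (c * Real.exp ⟪a, x₀⟫ / (Nat.factorial k : ℝ)) (slotProd a N j)
      rw [h0, Real.norm_eq_abs, abs_div, abs_mul, abs_of_pos (Real.exp_pos _),
        abs_of_pos (by positivity : (0:ℝ) < (Nat.factorial k : ℝ))]
      exact mul_le_mul_of_nonneg_left (norm_slotProd_le a N j h) (by positivity)
    have h2 : t ^ j = t ^ N * t ^ k := by rw [hj, pow_add]
    have e1 : Real.exp ⟪a, x₀⟫ ≤ Real.exp (‖a‖ * ‖x₀‖) :=
      Real.exp_le_exp.mpr ((le_abs_self _).trans (abs_real_inner_le_norm a x₀))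
    have e2 : ‖a‖ ^ k / (Nat.factorial k : ℝ) * t ^ k ≤ Real.exp ‖a‖ := by
      calc ‖a‖ ^ k / (Nat.factorial k : ℝ) * t ^ k
          ≤ ‖a‖ ^ k / (Nat.factorial k : ℝ) * 1 ^ k := by
            gcongr
          _ ≤ Real.exp ‖a‖ := by
            rw [one_pow, mul_one]
            exact pow_div_factorial_le_exp ‖a‖ (norm_nonneg a) k
    calc ‖(c * Real.exp ⟪a, x₀⟫ / (Nat.factorial k : ℝ)) • slotProd a N j‖ * t ^ j
        ≤ (|c| * Real.exp ⟪a, x₀⟫ / (Nat.factorial k : ℝ) * ‖a‖ ^ k) * (t ^ N * t ^ k) := by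
          rw [h2]; exact mul_le_mul_of_nonneg_right hnorm (by positivity)
      _ = |c| * Real.exp ⟪a, x₀⟫ * (‖a‖ ^ k / (Nat.factorial k : ℝ) * t ^ k) * t ^ N := by
          ring
      _ ≤ |c| * Real.exp (‖a‖ * ‖x₀‖) * Real.exp ‖a‖ * t ^ N := by
          have hc : (0:ℝ) ≤ |c| := abs_nonneg c
          have := Real.exp_pos ⟪a, x₀⟫
          gcongr
      _ = |c| * Real.exp (‖a‖ * ‖x₀‖ + ‖a‖) * t ^ N := by rw [Real.exp_add]; ring
  · rw [if_neg h]
    simpa using hpos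


lemma elemFun_hasFPowerSeriesOnBall (c : ℝ) (a : E) (N : ℕ) (x₀ : E) {t : ℝ}
    (ht0 : 0 < t) (ht1 : t ≤ 1) :
    HasFPowerSeriesOnBall (elemFun c a N) (elemSeries c a N x₀) (x₀, (0:ℝ))
      (ENNReal.ofReal t) := by
  constructor
  · -- radius bound
    have hb : ∀ j, ‖elemSeries c a N x₀ j‖ * (t.toNNReal : ℝ) ^ j
        ≤ |c| * Real.exp (‖a‖ * ‖x₀‖ + ‖a‖) := by
      intro j
      rw [Real.coe_toNNReal t ht0.le]
      refine (norm_elemSeries_le c a N x₀ ht0.le ht1 j).trans ?_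
      have h1 : t ^ N ≤ 1 := pow_le_one₀ ht0.le ht1
      have h2 : (0:ℝ) ≤ |c| * Real.exp (‖a‖ * ‖x₀‖ + ‖a‖) := by positivity
      exact mul_le_of_le_one_right h2 h1
    exact FormalMultilinearSeries.le_radius_of_bound _ _ hb
  · exact ENNReal.ofReal_pos.mpr ht0
  · intro y _
    have hsum0 : HasSum
        (fun k : ℕ => (c * Real.exp ⟪a, x₀⟫ * y.2 ^ N) * (⟪a, y.1⟫ ^ k / (Nat.factorial k : ℝ)))
        (c * Real.exp ⟪a, x₀⟫ * y.2 ^ N * Real.exp ⟪a, y.1⟫) :=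
      (exp_hasSum _).mul_left _
    have hinj : Function.Injective (fun k : ℕ => N + k) := fun p q h => by simpa using h
    have hzero : ∀ j ∉ Set.range (fun k : ℕ => N + k),
        (elemSeries c a N x₀ j) (fun _ => y) = 0 := by
      intro j hj
      have hN : ¬ N ≤ j := by
        intro hle
        exact hj ⟨j - N, by simpa using (Nat.add_sub_cancel' hle).symm ▸ rfl⟩
      rw [elemSeries, if_neg hN]
      rfl
    rw [← Function.Injective.hasSum_iff hinj hzero]
    have hcomp : ∀ k : ℕ, ((fun j => (elemSeries c a N x₀ j) (fun _ => y)) ∘ (fun k : ℕ => N + k)) k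
        = (c * Real.exp ⟪a, x₀⟫ * y.2 ^ N) * (⟪a, y.1⟫ ^ k / (Nat.factorial k : ℝ)) := by
      intro k
      have hle : N ≤ N + k := Nat.le_add_right N k
      simp only [Function.comp_apply, elemSeries, if_pos hle,
        ContinuousMultilinearMap.smul_apply]
      rw [slotProd_apply a N (N + k) hle y, Nat.add_sub_cancel_left]
      rw [smul_eq_mul]
      ring
    rw [funext hcomp]
    have htarget : elemFun c a N ((x₀, (0:ℝ)) + y)
        = c * Real.exp ⟪a, x₀⟫ * y.2 ^ N * Real.exp ⟪a, y.1⟫ := by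
      rw [elemFun]
      simp only [Prod.fst_add, Prod.snd_add]
      rw [inner_add_right, Real.exp_add, zero_add]
      ring
    rw [htarget]
    exact hsum0



/-- Weierstrass-type theorem: a series of power series with summable uniform coefficient
bounds sums to a function with a power series. -/
lemma lemmaW {ι : Type*} (g : ι → (E × ℝ) → ℝ)
    (q : ι → FormalMultilinearSeries ℝ (E × ℝ) ℝ) (c : E × ℝ) {t t' : ℝ}
    (h0 : 0 < t') (htt : t' < t)
    (hg : ∀ i, HasFPowerSeriesOnBall (g i) (q i) c (ENNReal.ofReal t))
    (B : ι → ℝ) (hB : ∀ i j, ‖q i j‖ * t ^ j ≤ B i) (hBs : Summable B) :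
    HasFPowerSeriesOnBall (fun z => ∑' i, g i z) (fun j => ∑' i, q i j) c
      (ENNReal.ofReal t') := by
  have ht : 0 < t := h0.trans htt
  have hBnn : ∀ i, 0 ≤ B i := fun i => le_trans (by positivity) (hB i 0)
  have hqle : ∀ i j, ‖q i j‖ ≤ B i / t ^ j := by
    intro i j
    rw [le_div_iff₀ (pow_pos ht j)]
    exact hB i j
  have hqsum : ∀ j, Summable (fun i => q i j) := by
    intro j
    exact Summable.of_norm_bounded (hBs.div_const (t ^ j)) (fun i => hqle i j)
  have hqnormsum : ∀ j, Summable (fun i => ‖q i j‖) :=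
    fun j => Summable.of_nonneg_of_le (fun i => norm_nonneg _) (fun i => hqle i j)
      (hBs.div_const (t ^ j))
  have hQle : ∀ j, ‖(∑' i, q i j)‖ ≤ (∑' i, B i) / t ^ j := by
    intro j
    refine (norm_tsum_le_tsum_norm (hqnormsum j)).trans ?_
    rw [div_eq_mul_inv, ← tsum_mul_right]
    exact Summable.tsum_le_tsum (fun i => by rw [← div_eq_mul_inv]; exact hqle i j)
      (hqnormsum j) ((hBs.div_const (t ^ j)).congr (fun i => (div_eq_mul_inv _ _)))
  constructor
  · -- radius
    refine FormalMultilinearSeries.le_radius_of_bound _ (∑' i, B i) (fun j => ?_)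
    have h1 : (t'.toNNReal : ℝ) = t' := Real.coe_toNNReal t' h0.le
    rw [h1]
    calc ‖∑' i, q i j‖ * t' ^ j ≤ ((∑' i, B i) / t ^ j) * t' ^ j :=
          mul_le_mul_of_nonneg_right (hQle j) (by positivity)
      _ = (∑' i, B i) * (t' / t) ^ j := by rw [div_pow]; ring
      _ ≤ (∑' i, B i) * 1 := by
          gcongr
          · exact tsum_nonneg hBnn
          · apply pow_le_one₀ (by positivity)
            rw [div_le_one ht]
            exact htt.le
      _ = ∑' i, B i := mul_one _
  · exact ENNReal.ofReal_pos.mpr h0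
  · intro y hy
    rw [EMetric.mem_ball, edist_zero_right] at hy
    have hyn : ‖y‖ < t' := by
      have h' : ENNReal.ofReal ‖y‖ < ENNReal.ofReal t' := by
        rwa [ofReal_norm]
      exact (ENNReal.ofReal_lt_ofReal_iff_of_nonneg (norm_nonneg y)).mp h'
    have hynt : ‖y‖ < t := hyn.trans htt
    set ρ := ‖y‖ / t with hρ
    have hρ0 : 0 ≤ ρ := by positivity
    have hρ1 : ρ < 1 := (div_lt_one ht).mpr hynt
    set u : ι × ℕ → ℝ := fun p => (q p.1 p.2) (fun _ => y) with hu
    have hub : ∀ p : ι × ℕ, ‖u p‖ ≤ B p.1 * ρ ^ p.2 := by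
      intro ⟨i, j⟩
      calc ‖(q i j) (fun _ => y)‖ ≤ ‖q i j‖ * ∏ _s : Fin j, ‖y‖ :=
            ContinuousMultilinearMap.le_opNorm _ _
        _ = ‖q i j‖ * ‖y‖ ^ j := by rw [Finset.prod_const, Finset.card_univ, Fintype.card_fin]
        _ ≤ (B i / t ^ j) * ‖y‖ ^ j := by
            apply mul_le_mul_of_nonneg_right (hqle i j) (by positivity)
        _ = B i * ρ ^ j := by rw [hρ, div_pow]; ring
    have hsum_u : Summable u :=
      Summable.of_norm_bounded
        (hBs.mul_of_nonneg (summable_geometric_of_lt_one hρ0 hρ1) hBnn (fun j => by positivity))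
        hub
    have hS : HasSum u (∑' p, u p) := hsum_u.hasSum
    have fib1 : ∀ i, HasSum (fun j => u (i, j)) (g i (c + y)) := by
      intro i
      apply (hg i).hasSum
      rw [EMetric.mem_ball, edist_zero_right, ← ofReal_norm]
      exact (ENNReal.ofReal_lt_ofReal_iff_of_nonneg (norm_nonneg y)).mpr hynt
    have key1 : HasSum (fun i => g i (c + y)) (∑' p, u p) := hS.prod_fiberwise fib1
    have key2 : ∀ j, HasSum (fun i => u (i, j)) ((∑' i, q i j) (fun _ => y)) := by
      intro j
      exact (ContinuousMultilinearMap.apply ℝ (fun _ : Fin j => E × ℝ) ℝ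
        (fun _ => y)).hasSum (hqsum j).hasSum
    have hswap : HasSum (fun p : ℕ × ι => u (p.2, p.1)) (∑' p, u p) := by
      have := (Equiv.prodComm ℕ ι).hasSum_iff (f := u) (a := ∑' p, u p)
      apply this.mpr
      convert hS using 1
    have key3 : HasSum (fun j => (∑' i, q i j) (fun _ => y)) (∑' p, u p) :=
      hswap.prod_fiberwise key2
    exact key1.tsum_eq ▸ key3


def evalEP (L : List (ℝ × E)) (x : E) : ℝ := (L.map fun p => p.1 * Real.exp ⟪p.2, x⟫).sum

@[simp] lemma evalEP_nil (x : E) : evalEP [] x = 0 := rfl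

@[simp] lemma evalEP_cons (p : ℝ × E) (L : List (ℝ × E)) (x : E) :
    evalEP (p :: L) x = p.1 * Real.exp ⟪p.2, x⟫ + evalEP L x := by
  simp [evalEP]

lemma evalEP_append (L₁ L₂ : List (ℝ × E)) (x : E) :
    evalEP (L₁ ++ L₂) x = evalEP L₁ x + evalEP L₂ x := by
  simp [evalEP]

def negEP (L : List (ℝ × E)) : List (ℝ × E) := L.map fun p => (-p.1, p.2)

lemma evalEP_negEP (L : List (ℝ × E)) (x : E) : evalEP (negEP L) x = - evalEP L x := by
  induction L with
  | nil => simp [negEP]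
  | cons p T ih => simp [negEP, evalEP_cons] at ih ⊢; rw [ih]; ring

def mulEP (L₁ L₂ : List (ℝ × E)) : List (ℝ × E) :=
  L₁.flatMap fun p => L₂.map fun q => (p.1 * q.1, p.2 + q.2)

lemma evalEP_smul (c : ℝ) (a : E) (L : List (ℝ × E)) (x : E) :
    evalEP (L.map fun q => (c * q.1, a + q.2)) x = (c * Real.exp ⟪a, x⟫) * evalEP L x := by
  induction L with
  | nil => simp
  | cons q T ih =>
      simp only [List.map_cons, evalEP_cons] at ih ⊢
      rw [ih, inner_add_left, Real.exp_add]
      ring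

lemma evalEP_mulEP (L₁ L₂ : List (ℝ × E)) (x : E) :
    evalEP (mulEP L₁ L₂) x = evalEP L₁ x * evalEP L₂ x := by
  induction L₁ with
  | nil => simp [mulEP]
  | cons p T ih =>
      rw [mulEP, List.flatMap_cons, evalEP_append, ← mulEP, ih, evalEP_cons, evalEP_smul]
      ring

lemma continuous_evalEP (L : List (ℝ × E)) : Continuous (evalEP L) := by
  induction L with
  | nil => exact (continuous_const : Continuous fun _ : E => (0:ℝ)).congr (fun x => (evalEP_nil x).symm)
  | cons p T ih =>
      have h1 : Continuous fun x : E => p.1 * Real.exp ⟪p.2, x⟫ :=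
        continuous_const.mul (Real.continuous_exp.comp (Continuous.inner continuous_const
          continuous_id))
      have : (evalEP (p :: T)) = fun x => p.1 * Real.exp ⟪p.2, x⟫ + evalEP T x := by
        funext x; simp
      rw [this]
      exact h1.add ih

/-- the weight of an exponential polynomial, suitable at centers of norm `≤ R` -/
def Xi (L : List (ℝ × E)) (R : ℝ) : ℝ :=
  (L.map fun p => |p.1| * Real.exp (‖p.2‖ * R + ‖p.2‖)).sum

lemma Xi_nonneg (L : List (ℝ × E)) (R : ℝ) : 0 ≤ Xi L R := by
  induction L with
  | nil => simp [Xi]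
  | cons p T ih => simp only [Xi, List.map_cons, List.sum_cons] at ih ⊢; positivity

lemma Xi_mono (L : List (ℝ × E)) {R R' : ℝ} (h : R ≤ R') (hR : 0 ≤ R) : Xi L R ≤ Xi L R' := by
  induction L with
  | nil => simp [Xi]
  | cons p T ih =>
      simp only [Xi, List.map_cons, List.sum_cons] at ih ⊢
      have : Real.exp (‖p.2‖ * R + ‖p.2‖) ≤ Real.exp (‖p.2‖ * R' + ‖p.2‖) := by
        apply Real.exp_le_exp.mpr
        have : ‖p.2‖ * R ≤ ‖p.2‖ * R' := mul_le_mul_of_nonneg_left h (norm_nonneg _)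
        linarith
      have h2 := mul_le_mul_of_nonneg_left this (abs_nonneg p.1)
      exact add_le_add h2 ih

lemma abs_evalEP_le (L : List (ℝ × E)) {x : E} {R : ℝ} (hx : ‖x‖ ≤ R) :
    |evalEP L x| ≤ Xi L R := by
  induction L with
  | nil => simp [Xi]
  | cons p T ih =>
      rw [evalEP_cons]
      refine (abs_add_le _ _).trans ?_
      have h1 : |p.1 * Real.exp ⟪p.2, x⟫| ≤ |p.1| * Real.exp (‖p.2‖ * R + ‖p.2‖) := by
        rw [abs_mul, abs_of_pos (Real.exp_pos _)]
        apply mul_le_mul_of_nonneg_left _ (abs_nonneg p.1)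
        apply Real.exp_le_exp.mpr
        have h2 : ⟪p.2, x⟫ ≤ ‖p.2‖ * ‖x‖ := (le_abs_self _).trans (abs_real_inner_le_norm _ _)
        have h3 : ‖p.2‖ * ‖x‖ ≤ ‖p.2‖ * R := mul_le_mul_of_nonneg_left hx (norm_nonneg _)
        have h4 : (0:ℝ) ≤ ‖p.2‖ := norm_nonneg _
        linarith
      have := add_le_add h1 ih
      simpa [Xi] using this

/-- Stone–Weierstrass: uniform approximation by exponential polynomials on balls. -/
lemma exists_EP_near (g : E → ℝ) (hg : Continuous g) (R : ℝ) {ε : ℝ} (hε : 0 < ε) :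
    ∃ L : List (ℝ × E), ∀ x : E, ‖x‖ ≤ R → |evalEP L x - g x| ≤ ε := by
  set K := Metric.closedBall (0 : E) R with hK
  haveI : CompactSpace K := isCompact_iff_compactSpace.mp (isCompact_closedBall (0:E) R)
  set gen : E → C(K, ℝ) := fun a =>
    ⟨fun x => Real.exp ⟪a, (x : E)⟫,
      Real.continuous_exp.comp (Continuous.inner continuous_const continuous_subtype_val)⟩
    with hgen
  set A : Subalgebra ℝ C(K, ℝ) := Algebra.adjoin ℝ (Set.range gen) with hA
  have sep : A.SeparatesPoints := by
    intro x y hxy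
    refine ⟨gen ((x : E) - (y : E)), ?_, ?_⟩
    · exact ⟨gen ((x : E) - (y : E)), Algebra.subset_adjoin (Set.mem_range_self _), rfl⟩
    · simp only [hgen, ContinuousMap.coe_mk]
      intro h
      apply hxy
      apply Subtype.coe_injective
      have h2 : ⟪(x : E) - (y : E), (x : E)⟫ = ⟪(x : E) - (y : E), (y : E)⟫ :=
        Real.exp_injective h
      have h3 : ⟪(x : E) - (y : E), (x : E) - (y : E)⟫ = 0 := by
        rw [inner_sub_right]
        linarith
      have h4 : (x : E) - (y : E) = 0 := inner_self_eq_zero.mp h3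
      exact sub_eq_zero.mp h4
  have rep : ∀ f ∈ A, ∃ L : List (ℝ × E), ∀ x : K, f x = evalEP L (x : E) := by
    intro f hf
    induction hf using Algebra.adjoin_induction with
    | mem f hfm =>
        obtain ⟨a, rfl⟩ := hfm
        exact ⟨[(1, a)], fun x => by simp [hgen]⟩
    | algebraMap r =>
        refine ⟨[(r, 0)], fun x => by simp⟩
    | add f₁ f₂ _ _ ih₁ ih₂ =>
        obtain ⟨L₁, h₁⟩ := ih₁
        obtain ⟨L₂, h₂⟩ := ih₂
        exact ⟨L₁ ++ L₂, fun x => by rw [evalEP_append, ← h₁ x, ← h₂ x]; rfl⟩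
    | mul f₁ f₂ _ _ ih₁ ih₂ =>
        obtain ⟨L₁, h₁⟩ := ih₁
        obtain ⟨L₂, h₂⟩ := ih₂
        exact ⟨mulEP L₁ L₂, fun x => by rw [evalEP_mulEP, ← h₁ x, ← h₂ x]; rfl⟩
  obtain ⟨gA, hgA⟩ := ContinuousMap.exists_mem_subalgebra_near_continuous_of_separatesPoints
    A sep (fun x : K => g x) (hg.comp continuous_subtype_val) ε hε
  obtain ⟨L, hL⟩ := rep gA gA.2
  refine ⟨L, fun x hx => ?_⟩
  have hxK : x ∈ K := by rwa [hK, Metric.mem_closedBall, dist_zero_right]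
  have := hgA ⟨x, hxK⟩
  rw [hL ⟨x, hxK⟩] at this
  rw [Real.norm_eq_abs] at this
  exact this.le


lemma evalEP_eq_sum_fin (L : List (ℝ × E)) (x : E) :
    evalEP L x = ∑ i : Fin L.length, (L.get i).1 * Real.exp ⟪(L.get i).2, x⟫ := by
  rw [evalEP]
  conv_lhs => rw [← List.ofFn_get L]
  rw [List.map_ofFn, List.sum_ofFn]
  simp

lemma Xi_eq_sum_fin (L : List (ℝ × E)) (R : ℝ) :
    Xi L R = ∑ i : Fin L.length, |(L.get i).1| * Real.exp (‖(L.get i).2‖ * R + ‖(L.get i).2‖) := by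
  rw [Xi]
  conv_lhs => rw [← List.ofFn_get L]
  rw [List.map_ofFn, List.sum_ofFn]
  simp

/-- The key construction: given a "damping" function `u`, analytic, with values in `(0,1]`,
and a continuous `g`, there is a continuous `G`, analytic where `u < 1`, agreeing with `g`
where `u = 1`. -/
lemma exists_glue (u g : E → ℝ) (hu_an : ∀ x, AnalyticAt ℝ u x)
    (hu_pos : ∀ x, 0 < u x) (hu_le : ∀ x, u x ≤ 1) (hg : Continuous g) :
    ∃ G : E → ℝ, Continuous G ∧ (∀ x, u x < 1 → AnalyticAt ℝ G x) ∧
      (∀ x, u x = 1 → G x = g x) := by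
  have hu_cont : Continuous u := continuous_iff_continuousAt.mpr (fun x => (hu_an x).continuousAt)
  -- Stone-Weierstrass approximations
  have happrox : ∀ m : ℕ, ∃ L : List (ℝ × E), ∀ x : E, ‖x‖ ≤ (m : ℝ) + 1 →
      |evalEP L x - g x| ≤ (1/2 : ℝ) ^ (m + 2) :=
    fun m => exists_EP_near g hg ((m : ℝ) + 1) (by positivity)
  choose L hL using happrox
  -- differences
  set D : ℕ → List (ℝ × E) := fun m => Nat.casesOn m (L 0) (fun m' => L (m' + 1) ++ negEP (L m'))
    with hD
  have h_tel : ∀ (M : ℕ) (x : E), ∑ m ∈ Finset.range (M + 1), evalEP (D m) x = evalEP (L M) x := by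
    intro M x
    induction M with
    | zero => simp [hD]
    | succ M ih =>
        rw [Finset.sum_range_succ, ih]
        show evalEP (L M) x + evalEP (L (M+1) ++ negEP (L M)) x = _
        rw [evalEP_append, evalEP_negEP]
        ring
  have hDsmall : ∀ (m : ℕ) (x : E), 1 ≤ m → ‖x‖ ≤ (m : ℝ) → |evalEP (D m) x| ≤ (1/2 : ℝ) ^ m := by
    intro m x hm hx
    obtain ⟨m', rfl⟩ : ∃ m', m = m' + 1 := ⟨m - 1, by omega⟩
    show |evalEP (L (m' + 1) ++ negEP (L m')) x| ≤ _
    rw [evalEP_append, evalEP_negEP]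
    have h1 := hL (m' + 1) x (by push_cast at hx ⊢; linarith)
    have h2 := hL m' x (by push_cast at hx ⊢; linarith)
    have : evalEP (L (m' + 1)) x + -evalEP (L m') x
        = (evalEP (L (m' + 1)) x - g x) - (evalEP (L m') x - g x) := by ring
    rw [this]
    refine (abs_sub _ _).trans ?_
    have hpow : (1/2 : ℝ) ^ (m' + 1 + 2) + (1/2 : ℝ) ^ (m' + 2) ≤ (1/2 : ℝ) ^ (m' + 1) := by
      rw [show m' + 1 + 2 = m' + 3 by ring]
      have e : (1/2 : ℝ) ^ (m' + 3) = (1/2 : ℝ) ^ m' * (1/8) := by rw [pow_add]; norm_num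
      have e2 : (1/2 : ℝ) ^ (m' + 2) = (1/2 : ℝ) ^ m' * (1/4) := by rw [pow_add]; norm_num
      have e3 : (1/2 : ℝ) ^ (m' + 1) = (1/2 : ℝ) ^ m' * (1/2) := by rw [pow_add]; norm_num
      rw [e, e2, e3]
      have : (0:ℝ) ≤ (1/2:ℝ) ^ m' := by positivity
      nlinarith
    exact (add_le_add h1 h2).trans hpow
  -- damping exponents
  set N : ℕ → ℕ := fun m => m * (1 + Nat.ceil (Xi (D m) m)) with hN
  set T : ℕ → E → ℝ := fun m x => evalEP (D m) x * (u x) ^ (N m) with hT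
  set G : E → ℝ := fun x => ∑' m, T m x with hG
  have hu_abs : ∀ (x : E) (k : ℕ), |u x ^ k| ≤ 1 := by
    intro x k
    rw [abs_pow, abs_of_pos (hu_pos x)]
    exact pow_le_one₀ (hu_pos x).le (hu_le x)
  -- basic term bound used everywhere
  have hTbound : ∀ (m : ℕ) (x : E), 1 ≤ m → ‖x‖ ≤ (m:ℝ) → |T m x| ≤ (1/2 : ℝ) ^ m := by
    intro m x hm hx
    rw [hT]
    simp only
    rw [abs_mul]
    calc |evalEP (D m) x| * |u x ^ N m| ≤ (1/2:ℝ)^m * 1 :=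
          mul_le_mul (hDsmall m x hm hx) (hu_abs x _) (abs_nonneg _) (by positivity)
      _ = (1/2:ℝ)^m := mul_one _
  have hTsummable : ∀ x : E, Summable (fun m => T m x) := by
    intro x
    apply Summable.of_norm_bounded_eventually_nat (g := fun m => (1/2:ℝ)^m)
      (summable_geometric_of_lt_one (by norm_num) (by norm_num))
    filter_upwards [Filter.eventually_ge_atTop (max 1 ⌈‖x‖⌉₊)] with m hm
    have h1 : 1 ≤ m := le_trans (le_max_left _ _) hm
    have h2 : ‖x‖ ≤ (m:ℝ) := le_trans (Nat.le_ceil _) (by exact_mod_cast le_trans (le_max_right _ _) hm)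
    simpa using hTbound m x h1 h2
  refine ⟨G, ?_, ?_, ?_⟩
  · -- continuity
    rw [continuous_iff_continuousAt]
    intro x₀
    set M : ℕ := ⌈‖x₀‖⌉₊ + 1 with hM
    have hx₀M : ‖x₀‖ < (M:ℝ) := by
      have := Nat.le_ceil ‖x₀‖
      push_cast [hM]
      linarith
    set w : ℕ → ℝ := fun m => if m < M then Xi (D m) M else (1/2:ℝ)^m with hw
    have hws : Summable w := by
      apply Summable.of_norm_bounded_eventually_nat (g := fun m => (1/2:ℝ)^m)
        (summable_geometric_of_lt_one (by norm_num) (by norm_num))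
      filter_upwards [Filter.eventually_ge_atTop M] with m hm
      rw [hw]
      simp only [if_neg (by omega : ¬ m < M)]
      rw [Real.norm_eq_abs, abs_of_nonneg (by positivity)]
    have hbound : ∀ (m : ℕ) (x : E), x ∈ Metric.ball (0:E) (M:ℝ) → ‖T m x‖ ≤ w m := by
      intro m x hx
      rw [Metric.mem_ball, dist_zero_right] at hx
      show ‖T m x‖ ≤ if m < M then Xi (D m) (M:ℝ) else (1/2:ℝ)^m
      by_cases hcase : m < M
      · rw [if_pos hcase, Real.norm_eq_abs, hT]
        simp only
        rw [abs_mul]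
        calc |evalEP (D m) x| * |u x ^ N m| ≤ Xi (D m) M * 1 :=
              mul_le_mul (abs_evalEP_le (D m) hx.le) (hu_abs x _) (abs_nonneg _)
                (Xi_nonneg _ _)
          _ = Xi (D m) M := mul_one _
      · rw [if_neg hcase, Real.norm_eq_abs]
        apply hTbound m x (by omega)
        have : (M:ℝ) ≤ (m:ℝ) := by exact_mod_cast (by omega : M ≤ m)
        linarith
    have huc : TendstoUniformlyOn (fun (k : ℕ) (x : E) => ∑ m ∈ Finset.range k, T m x) G
        Filter.atTop (Metric.ball (0:E) (M:ℝ)) :=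
      tendstoUniformlyOn_tsum_nat hws hbound
    have hTc : ∀ m, Continuous (T m) := by
      intro m
      exact (continuous_evalEP (D m)).mul (hu_cont.pow _)
    have hGc : ContinuousOn G (Metric.ball (0:E) (M:ℝ)) := by
      apply huc.continuousOn
      apply Filter.Eventually.frequently
      filter_upwards with k
      exact (continuous_finset_sum _ (fun m _ => hTc m)).continuousOn
    exact hGc.continuousAt (Metric.isOpen_ball.mem_nhds (by
      rw [Metric.mem_ball, dist_zero_right]; exact hx₀M))
  · -- analyticity where u < 1
    intro x₀ hθ1
    set θ := u x₀ with hθ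
    have hθ0 : 0 < θ := hu_pos x₀
    -- the key summability estimate
    have key : ∀ s2 R : ℝ, 0 ≤ s2 → s2 < 1 → 0 ≤ R →
        Summable (fun m => s2 ^ N m * Xi (D m) R) := by
      intro s2 R hs0 hs1 hR0
      obtain ⟨m₁, hm₁⟩ := exists_pow_lt_of_lt_one (by norm_num : (0:ℝ) < 1/2) hs1
      apply Summable.of_norm_bounded_eventually_nat (g := fun m => s2 ^ m)
        (summable_geometric_of_lt_one hs0 hs1)
      filter_upwards [Filter.eventually_ge_atTop (max m₁ ⌈R⌉₊)] with m hm
      have hmm₁ : m₁ ≤ m := le_trans (le_max_left _ _) hm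
      have hmR : R ≤ (m:ℝ) := le_trans (Nat.le_ceil R)
        (by exact_mod_cast le_trans (le_max_right _ _) hm)
      have hXle : Xi (D m) R ≤ Xi (D m) (m:ℝ) := Xi_mono _ hmR hR0
      set K := Nat.ceil (Xi (D m) (m:ℝ)) with hK
      have hNm : N m = m + m * K := by rw [hN]; ring
      have h2 : s2 ^ m ≤ 1/2 := le_trans (pow_le_pow_of_le_one hs0 hs1.le hmm₁) hm₁.le
      have h3 : s2 ^ (m * K) ≤ (1/2 : ℝ) ^ K := by
        rw [pow_mul]
        exact pow_le_pow_left₀ (by positivity) h2 K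
      have h4 : Xi (D m) (m:ℝ) ≤ 2 ^ K := by
        calc Xi (D m) (m:ℝ) ≤ (K:ℝ) := Nat.le_ceil _
          _ ≤ 2 ^ K := by exact_mod_cast (Nat.lt_two_pow_self (n := K)).le
      have hXnn := Xi_nonneg (D m) (m:ℝ)
      have hXRnn := Xi_nonneg (D m) R
      rw [Real.norm_eq_abs, abs_of_nonneg (mul_nonneg (pow_nonneg hs0 _) hXRnn)]
      have e4 : ((1:ℝ)/2) ^ K * 2 ^ K = 1 := by
        rw [← mul_pow]; norm_num
      calc s2 ^ N m * Xi (D m) R ≤ s2 ^ N m * Xi (D m) (m:ℝ) := by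
            apply mul_le_mul_of_nonneg_left hXle (pow_nonneg hs0 _)
        _ = s2 ^ m * (s2 ^ (m * K) * Xi (D m) (m:ℝ)) := by rw [hNm, pow_add]; ring
        _ ≤ s2 ^ m * ((1/2 : ℝ) ^ K * 2 ^ K) := by
            apply mul_le_mul_of_nonneg_left _ (pow_nonneg hs0 _)
            exact mul_le_mul h3 h4 hXnn (by positivity)
        _ = s2 ^ m := by rw [e4, mul_one]
    set t : ℝ := (1 + θ)/2 with htdef
    set t' : ℝ := (1 + 3*θ)/4 with ht'def
    have ht0 : 0 < t := by rw [htdef]; linarith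
    have ht1 : t ≤ 1 := by rw [htdef]; linarith
    have htlt1 : t < 1 := by rw [htdef]; linarith
    have hθt' : θ < t' := by rw [ht'def]; linarith
    have ht't : t' < t := by rw [ht'def, htdef]; linarith
    have h0t' : 0 < t' := by rw [ht'def]; linarith
    set cs : (Σ m : ℕ, Fin (D m).length) → ℝ := fun p => ((D p.1).get p.2).1 with hcs
    set as : (Σ m : ℕ, Fin (D m).length) → E := fun p => ((D p.1).get p.2).2 with has
    set gi : (Σ m : ℕ, Fin (D m).length) → (E × ℝ) → ℝ :=
      fun p => elemFun (cs p) (as p) (N p.1) with hgi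
    set qi : (Σ m : ℕ, Fin (D m).length) → FormalMultilinearSeries ℝ (E × ℝ) ℝ :=
      fun p => elemSeries (cs p) (as p) (N p.1) x₀ with hqi
    set B : (Σ m : ℕ, Fin (D m).length) → ℝ :=
      fun p => |cs p| * Real.exp (‖as p‖ * ‖x₀‖ + ‖as p‖) * t ^ (N p.1) with hB
    have hgq : ∀ p, HasFPowerSeriesOnBall (gi p) (qi p) (x₀, (0:ℝ)) (ENNReal.ofReal t) :=
      fun p => elemFun_hasFPowerSeriesOnBall _ _ _ _ ht0 ht1
    have hBb : ∀ p j, ‖qi p j‖ * t ^ j ≤ B p :=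
      fun p j => norm_elemSeries_le _ _ _ _ ht0.le ht1 j
    have hfibB : ∀ m : ℕ, ∑' i : Fin (D m).length, B ⟨m, i⟩ = t ^ N m * Xi (D m) ‖x₀‖ := by
      intro m
      rw [tsum_fintype, Xi_eq_sum_fin, Finset.mul_sum]
      apply Finset.sum_congr rfl
      intro i _
      rw [hB]
      ring
    have hBs : Summable B := by
      apply (summable_sigma_of_nonneg (fun p => by rw [hB]; positivity)).mpr
      refine ⟨fun m => (hasSum_fintype _).summable, ?_⟩
      rw [funext hfibB]
      exact key t ‖x₀‖ ht0.le htlt1 (norm_nonneg x₀)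
    have hball := lemmaW gi qi (x₀, (0:ℝ)) h0t' ht't hgq B hBb hBs
    have hH : AnalyticAt ℝ (fun z => ∑' p : (Σ m : ℕ, Fin (D m).length), gi p z) (x₀, θ) := by
      apply hball.analyticAt_of_mem
      rw [EMetric.mem_ball, Prod.edist_eq, edist_self, edist_dist, Real.dist_eq]
      have h1 : |θ - 0| = θ := by rw [sub_zero, abs_of_pos hθ0]
      rw [h1]
      have h2 : max (0 : ENNReal) (ENNReal.ofReal θ) = ENNReal.ofReal θ := by simp
      rw [h2]
      exact (ENNReal.ofReal_lt_ofReal_iff h0t').mpr hθt'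
    have hpair : AnalyticAt ℝ (fun x : E => (x, u x)) x₀ := analyticAt_id.prod (hu_an x₀)
    have hcomp : AnalyticAt ℝ
        (fun x : E => ∑' p : (Σ m : ℕ, Fin (D m).length), gi p (x, u x)) x₀ :=
      AnalyticAt.comp (f := fun x : E => (x, u x))
        (g := fun z => ∑' p : (Σ m : ℕ, Fin (D m).length), gi p z) hH hpair
    -- local equality
    have hswitch : ∀ x : E, u x < 1 →
        G x = ∑' p : (Σ m : ℕ, Fin (D m).length), gi p (x, u x) := by
      intro x hux
      have hterm : ∀ (m : ℕ) (i : Fin (D m).length),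
          ‖gi ⟨m, i⟩ (x, u x)‖ ≤ u x ^ N m * (|cs ⟨m,i⟩| *
            Real.exp (‖as ⟨m,i⟩‖ * ‖x‖ + ‖as ⟨m,i⟩‖)) := by
        intro m i
        rw [hgi]
        show ‖cs ⟨m,i⟩ * Real.exp ⟪as ⟨m,i⟩, x⟫ * (u x) ^ N m‖ ≤ _
        rw [Real.norm_eq_abs, abs_mul, abs_mul, abs_of_pos (Real.exp_pos _),
          abs_of_pos (pow_pos (hu_pos x) _)]
        have hexp : Real.exp ⟪as ⟨m,i⟩, x⟫ ≤ Real.exp (‖as ⟨m,i⟩‖ * ‖x‖ + ‖as ⟨m,i⟩‖) := by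
          apply Real.exp_le_exp.mpr
          have := (le_abs_self _).trans (abs_real_inner_le_norm (as ⟨m,i⟩) x)
          have h4 : (0:ℝ) ≤ ‖as ⟨m,i⟩‖ := norm_nonneg _
          linarith
        calc |cs ⟨m,i⟩| * Real.exp ⟪as ⟨m,i⟩, x⟫ * u x ^ N m
            ≤ |cs ⟨m,i⟩| * Real.exp (‖as ⟨m,i⟩‖ * ‖x‖ + ‖as ⟨m,i⟩‖) * u x ^ N m := by
              exact mul_le_mul_of_nonneg_right
                (mul_le_mul_of_nonneg_left hexp (abs_nonneg _))
                (pow_nonneg (hu_pos x).le _)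
          _ = u x ^ N m * (|cs ⟨m,i⟩| * Real.exp (‖as ⟨m,i⟩‖ * ‖x‖ + ‖as ⟨m,i⟩‖)) := by ring
      have hnorms : Summable (fun p : (Σ m : ℕ, Fin (D m).length) => ‖gi p (x, u x)‖) := by
        apply (summable_sigma_of_nonneg (fun p => norm_nonneg _)).mpr
        refine ⟨fun m => (hasSum_fintype _).summable, ?_⟩
        apply Summable.of_nonneg_of_le (fun m => tsum_nonneg fun i => norm_nonneg _)
          (fun m => ?_) (key (u x) ‖x‖ (hu_pos x).le hux (norm_nonneg x))
        rw [tsum_fintype, Xi_eq_sum_fin, Finset.mul_sum]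
        exact Finset.sum_le_sum (fun i _ => hterm m i)
      have hsum : Summable (fun p : (Σ m : ℕ, Fin (D m).length) => gi p (x, u x)) :=
        hnorms.of_norm
      show (∑' m, T m x) = _
      rw [Summable.tsum_sigma' (fun m => (hasSum_fintype _).summable) hsum]
      apply tsum_congr
      intro m
      rw [tsum_fintype]
      rw [hT]
      show (evalEP (D m) x * u x ^ N m) = _
      rw [evalEP_eq_sum_fin, Finset.sum_mul]
      rfl
    have hev1 : ∀ᶠ x in nhds x₀, u x < 1 := by
      have h := hu_cont.continuousAt (x := x₀) (Iio_mem_nhds hθ1)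
      exact h
    have hev : G =ᶠ[nhds x₀] fun x => ∑' p : (Σ m : ℕ, Fin (D m).length), gi p (x, u x) := by
      filter_upwards [hev1] with x hx
      exact hswitch x hx
    exact hcomp.congr hev.symm
  · -- value where u = 1
    intro x hx1
    have h1 : ∀ m, T m x = evalEP (D m) x := by
      intro m
      rw [hT]
      simp only [hx1, one_pow, mul_one]
    have h2 : HasSum (fun m => T m x) (G x) := (hTsummable x).hasSum
    have h3 : Filter.Tendsto (fun M => ∑ m ∈ Finset.range M, T m x) Filter.atTop (nhds (G x)) :=
      h2.tendsto_sum_nat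
    have h4 : Filter.Tendsto (fun M => ∑ m ∈ Finset.range (M + 1), T m x) Filter.atTop
        (nhds (G x)) := h3.comp (Filter.tendsto_add_atTop_nat 1)
    have h5 : ∀ M, ∑ m ∈ Finset.range (M + 1), T m x = evalEP (L M) x := by
      intro M
      rw [← h_tel M x]
      exact Finset.sum_congr rfl (fun m _ => h1 m)
    rw [funext h5] at h4
    have h6 : Filter.Tendsto (fun M : ℕ => evalEP (L M) x) Filter.atTop (nhds (g x)) := by
      rw [tendsto_iff_dist_tendsto_zero]
      apply squeeze_zero' (by filter_upwards with M; exact dist_nonneg)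
        (g := fun M => (1/2:ℝ)^(M+2))
      · filter_upwards [Filter.eventually_ge_atTop ⌈‖x‖⌉₊] with M hM
        rw [Real.dist_eq]
        apply hL M x
        calc ‖x‖ ≤ (⌈‖x‖⌉₊ : ℝ) := Nat.le_ceil _
          _ ≤ (M:ℝ) + 1 := by exact_mod_cast Nat.le_succ_of_le hM
      · have : Filter.Tendsto (fun M : ℕ => (1/2:ℝ)^M) Filter.atTop (nhds 0) :=
          tendsto_pow_atTop_nhds_zero_of_lt_one (by norm_num) (by norm_num)
        have := this.comp (Filter.tendsto_add_atTop_nat 2)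
        simpa [Function.comp_def] using this
    exact tendsto_nhds_unique h4 h6


end St13

open St13 in
/-- If `f₁,…,f_r, φ` are real-analytic on `ℝⁿ` and `φ = ∑ i φᵢ fᵢ` has a continuous
solution, then it has a solution which is continuous on `ℝⁿ` and real-analytic on
the open set `Ω = {x : some f i x ≠ 0}`. -/
theorem statement13 (n r : ℕ) (f : Fin r → EuclideanSpace ℝ (Fin n) → ℝ)
    (φ : EuclideanSpace ℝ (Fin n) → ℝ)
    (hf : ∀ i, AnalyticOnNhd ℝ (f i) Set.univ) (hφ : AnalyticOnNhd ℝ φ Set.univ)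
    (hsol : ∃ φ' : Fin r → EuclideanSpace ℝ (Fin n) → ℝ,
      (∀ i, Continuous (φ' i)) ∧ ∀ x, ∑ i, φ' i x * f i x = φ x) :
    ∃ ψ : Fin r → EuclideanSpace ℝ (Fin n) → ℝ,
      (∀ i, Continuous (ψ i)) ∧
      (∀ i, AnalyticOnNhd ℝ (ψ i) {x | ∃ j, f j x ≠ 0}) ∧
      (∀ x, ∑ i, ψ i x * f i x = φ x) := by
  classical
  obtain ⟨φ', hφc, hsum⟩ := hsol
  set σ : EuclideanSpace ℝ (Fin n) → ℝ := fun x => ∑ i, f i x * f i x with hσdef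
  have hσ_an : ∀ x, AnalyticAt ℝ σ x := by
    intro x
    apply Finset.analyticAt_fun_sum
    intro i _
    exact (hf i x trivial).mul (hf i x trivial)
  have hσc : Continuous σ := continuous_iff_continuousAt.mpr (fun x => (hσ_an x).continuousAt)
  have hfc : ∀ i, Continuous (f i) := by
    intro i
    exact continuous_iff_continuousAt.mpr (fun x => (hf i x trivial).continuousAt)
  have hσ_nonneg : ∀ x, 0 ≤ σ x := fun x => Finset.sum_nonneg (fun i _ => mul_self_nonneg _)
  have hσ0 : ∀ x, σ x = 0 ↔ ∀ i, f i x = 0 := by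
    intro x
    rw [hσdef]
    constructor
    · intro h i
      have := (Finset.sum_eq_zero_iff_of_nonneg (fun i _ => mul_self_nonneg (f i x))).mp h
        i (Finset.mem_univ i)
      exact mul_self_eq_zero.mp this
    · intro h
      apply Finset.sum_eq_zero
      intro i _
      rw [h i, mul_zero]
  have hΩ : ∀ x, (∃ j, f j x ≠ 0) → σ x ≠ 0 := by
    intro x ⟨j, hj⟩ h0
    exact hj ((hσ0 x).mp h0 j)
  -- the damping function
  set u : EuclideanSpace ℝ (Fin n) → ℝ := fun x => (1 + σ x * σ x)⁻¹ with hudef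
  have hden_pos : ∀ x, 0 < 1 + σ x * σ x := fun x => by nlinarith [mul_self_nonneg (σ x)]
  have hu_an : ∀ x, AnalyticAt ℝ u x := by
    intro x
    exact (analyticAt_const.add ((hσ_an x).mul (hσ_an x))).inv (hden_pos x).ne'
  have hu_pos : ∀ x, 0 < u x := fun x => inv_pos.mpr (hden_pos x)
  have hu_le : ∀ x, u x ≤ 1 := by
    intro x
    rw [hudef]
    simp only
    rw [inv_le_one_iff₀]
    right
    nlinarith [mul_self_nonneg (σ x)]
  have hu_eq1 : ∀ x, σ x = 0 → u x = 1 := by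
    intro x h
    rw [hudef]
    simp [h]
  have hu_lt1 : ∀ x, σ x ≠ 0 → u x < 1 := by
    intro x h
    have h2 : 0 < σ x * σ x := by
      rcases lt_or_gt_of_ne h with h' | h'
      · nlinarith
      · nlinarith
    rw [hudef]
    simp only
    rw [inv_lt_one_iff₀]
    right
    linarith
  -- construct G j
  have hGs : ∀ j : Fin r, ∃ G : EuclideanSpace ℝ (Fin n) → ℝ, Continuous G ∧ (∀ x, u x < 1 → AnalyticAt ℝ G x) ∧
      (∀ x, u x = 1 → G x = φ' j x) :=
    fun j => exists_glue u (φ' j) hu_an hu_pos hu_le (hφc j)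
  choose G hGc hGan hGz using hGs
  have hGz' : ∀ (j : Fin r) (x : EuclideanSpace ℝ (Fin n)), σ x = 0 → G j x = φ' j x :=
    fun j x hx => hGz j x (hu_eq1 x hx)
  have hGan' : ∀ (j : Fin r) (x : EuclideanSpace ℝ (Fin n)), σ x ≠ 0 → AnalyticAt ℝ (G j) x :=
    fun j x hx => hGan j x (hu_lt1 x hx)
  -- the defect
  set h : EuclideanSpace ℝ (Fin n) → ℝ := fun x => (∑ j, G j x * f j x) - φ x with hhdef
  have hh_alt : ∀ x, h x = ∑ j, (G j x - φ' j x) * f j x := by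
    intro x
    rw [hhdef]
    simp only
    rw [← hsum x, ← Finset.sum_sub_distrib]
    apply Finset.sum_congr rfl
    intro j _
    ring
  set ψ : Fin r → EuclideanSpace ℝ (Fin n) → ℝ :=
    fun i x => if σ x = 0 then G i x else G i x - h x * f i x / σ x with hψdef
  -- the error functional
  set δ : EuclideanSpace ℝ (Fin n) → ℝ := fun x => ∑ j, |G j x - φ' j x| with hδdef
  have hδc : Continuous δ :=
    continuous_finset_sum _ (fun j _ => ((hGc j).sub (hφc j)).abs)
  have hδ_nonneg : ∀ x, 0 ≤ δ x := fun x => Finset.sum_nonneg (fun j _ => abs_nonneg _)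
  have hδz : ∀ x, σ x = 0 → δ x = 0 := by
    intro x hx
    apply Finset.sum_eq_zero
    intro j _
    rw [hGz' j x hx, sub_self, abs_zero]
  -- the fundamental bound
  have hbound : ∀ (i : Fin r) (x : EuclideanSpace ℝ (Fin n)), |ψ i x - G i x| ≤ δ x := by
    intro i x
    by_cases hx : σ x = 0
    · rw [hψdef]
      simp only [if_pos hx, sub_self, abs_zero]
      exact hδ_nonneg x
    · rw [hψdef]
      simp only [if_neg hx]
      have hσpos : 0 < σ x := lt_of_le_of_ne (hσ_nonneg x) (Ne.symm hx)
      have hfsq : ∀ j, f j x * f j x ≤ σ x := by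
        intro j
        exact Finset.single_le_sum (fun k _ => mul_self_nonneg (f k x)) (Finset.mem_univ j)
      have habs : ∀ j, |f j x| ≤ Real.sqrt (σ x) := by
        intro j
        rw [← Real.sqrt_mul_self_eq_abs]
        exact Real.sqrt_le_sqrt (hfsq j)
      have hprod : ∀ j, |f j x| * |f i x| ≤ σ x := by
        intro j
        calc |f j x| * |f i x| ≤ Real.sqrt (σ x) * Real.sqrt (σ x) :=
              mul_le_mul (habs j) (habs i) (abs_nonneg _) (Real.sqrt_nonneg _)
          _ = σ x := Real.mul_self_sqrt (hσ_nonneg x)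
      have key : |h x * f i x| ≤ δ x * σ x := by
        rw [hh_alt x, Finset.sum_mul]
        refine (Finset.abs_sum_le_sum_abs _ _).trans ?_
        rw [hδdef]
        simp only
        rw [Finset.sum_mul]
        apply Finset.sum_le_sum
        intro j _
        rw [abs_mul, abs_mul]
        rw [mul_assoc]
        apply mul_le_mul_of_nonneg_left (hprod j) (abs_nonneg _)
      have : G i x - h x * f i x / σ x - G i x = -(h x * f i x / σ x) := by ring
      rw [this, abs_neg, abs_div, abs_of_pos hσpos, div_le_iff₀ hσpos]
      exact key
  -- eventual formula on the open set σ ≠ 0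
  have hev_ne : ∀ x₀ : EuclideanSpace ℝ (Fin n), σ x₀ ≠ 0 → ∀ᶠ x in nhds x₀, σ x ≠ 0 := by
    intro x₀ hx₀
    have := hσc.continuousAt (x := x₀) (compl_singleton_mem_nhds hx₀)
    exact this
  refine ⟨ψ, ?_, ?_, ?_⟩
  · -- continuity
    intro i
    rw [continuous_iff_continuousAt]
    intro x₀
    by_cases hx₀ : σ x₀ = 0
    · -- continuity at a zero of σ via squeeze
      have h1 : Filter.Tendsto (fun x => ψ i x - G i x) (nhds x₀) (nhds 0) := by
        rw [tendsto_zero_iff_norm_tendsto_zero]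
        refine squeeze_zero (g := δ) (fun x => norm_nonneg _) (fun x => ?_) ?_
        · exact le_trans (le_of_eq (Real.norm_eq_abs _)) (hbound i x)
        · have h2 : Filter.Tendsto δ (nhds x₀) (nhds (δ x₀)) := hδc.continuousAt
          rwa [hδz x₀ hx₀] at h2
      have h3 : Filter.Tendsto (fun x => (ψ i x - G i x) + G i x) (nhds x₀)
          (nhds (0 + G i x₀)) := h1.add (hGc i).continuousAt
      have h4 : (fun x => (ψ i x - G i x) + G i x) = ψ i := by funext x; ring
      rw [h4] at h3
      rw [zero_add] at h3
      have h5 : ψ i x₀ = G i x₀ := by rw [hψdef]; simp only [if_pos hx₀]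
      rw [ContinuousAt, h5]
      exact h3
    · -- continuity away from zeros of σ
      have hform : ∀ᶠ x in nhds x₀, (fun x => G i x - h x * f i x / σ x) x = ψ i x := by
        filter_upwards [hev_ne x₀ hx₀] with x hx
        rw [hψdef]
        simp only [if_neg hx]
      apply ContinuousAt.congr _ hform
      have hhc : Continuous h :=
        (continuous_finset_sum _ (fun j _ => (hGc j).mul (hfc j))).sub
          (continuous_iff_continuousAt.mpr (fun x => (hφ x trivial).continuousAt))
      exact ((hGc i).continuousAt).sub
        (((hhc.mul (hfc i)).continuousAt).div hσc.continuousAt hx₀)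
  · -- analyticity on Ω
    intro i x₀ hx₀
    have hσx₀ : σ x₀ ≠ 0 := hΩ x₀ hx₀
    have hform : ∀ᶠ x in nhds x₀, (fun x => G i x - h x * f i x / σ x) x = ψ i x := by
      filter_upwards [hev_ne x₀ hσx₀] with x hx
      rw [hψdef]
      simp only [if_neg hx]
    apply AnalyticAt.congr _ hform
    have hh_an : AnalyticAt ℝ h x₀ := by
      apply AnalyticAt.sub _ (hφ x₀ trivial)
      apply Finset.analyticAt_fun_sum
      intro j _
      exact (hGan' j x₀ hσx₀).mul (hf j x₀ trivial)
    exact (hGan' i x₀ hσx₀).sub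
      (((hh_an.mul (hf i x₀ trivial))).div (hσ_an x₀) hσx₀)
  · -- the division identity
    intro x
    by_cases hx : σ x = 0
    · have hzero : ∀ i, f i x = 0 := (hσ0 x).mp hx
      have h1 : ∑ i, ψ i x * f i x = 0 := by
        apply Finset.sum_eq_zero
        intro i _
        rw [hzero i, mul_zero]
      have h2 : φ x = 0 := by
        rw [← hsum x]
        apply Finset.sum_eq_zero
        intro i _
        rw [hzero i, mul_zero]
      rw [h1, h2]
    · have hψx : ∀ i, ψ i x = G i x - h x * f i x / σ x := by
        intro i
        rw [hψdef]
        simp only [if_neg hx]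
      calc ∑ i, ψ i x * f i x
          = ∑ i, (G i x * f i x - h x / σ x * (f i x * f i x)) := by
            apply Finset.sum_congr rfl
            intro i _
            rw [hψx i]
            ring
        _ = (∑ i, G i x * f i x) - h x / σ x * σ x := by
            rw [Finset.sum_sub_distrib, Finset.mul_sum, hσdef]
        _ = (∑ i, G i x * f i x) - h x := by rw [div_mul_cancel₀ _ hx]
        _ = φ x := by rw [hhdef]; ring
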